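/- Let R be the G-indexed matrix over 𝔽₂ with R(i,j) = 1 iff i + j = 0, and let D_R = diag(R,R,R). Then the involution v ↦ D_R v maps the set ker(H_Z) \ rs(H_X) bijectively onto the set ker(H_Zᵀ) \ rs(M_Z) and preserves Hamming weight. Consequently the X-distance d_X := min{|v| : v ∈ ker(H_Z) \ rs(H_X)} equals min{|v| : v ∈ ker(H_Zᵀ) \ rs(M_Z)}. -/

import Mathlib

open Matrix

/-- `H_X = [A B C]`. -/
def TT_HX {G : Type*} [AddCommGroup G] (a b c : G → ZMod 2) :
    Matrix G (Fin 3 × G) (ZMod 2) :=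
  Matrix.of fun g p =>
    ![Matrix.circulant a, Matrix.circulant b, Matrix.circulant c] p.1 g p.2

/-- `H_Z = [[0, Cᵀ, Bᵀ], [Cᵀ, 0, Aᵀ], [Bᵀ, Aᵀ, 0]]`. -/
def TT_HZ {G : Type*} [AddCommGroup G] (a b c : G → ZMod 2) :
    Matrix (Fin 3 × G) (Fin 3 × G) (ZMod 2) :=
  Matrix.of fun p q =>
    ![![0, (Matrix.circulant c)ᵀ, (Matrix.circulant b)ᵀ],
      ![(Matrix.circulant c)ᵀ, 0, (Matrix.circulant a)ᵀ],
      ![(Matrix.circulant b)ᵀ, (Matrix.circulant a)ᵀ, 0]] p.1 q.1 p.2 q.2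

/-- `M_Z = [Aᵀ Bᵀ Cᵀ]`. -/
def TT_MZ {G : Type*} [AddCommGroup G] (a b c : G → ZMod 2) :
    Matrix G (Fin 3 × G) (ZMod 2) :=
  Matrix.of fun g p =>
    ![(Matrix.circulant a)ᵀ, (Matrix.circulant b)ᵀ, (Matrix.circulant c)ᵀ] p.1 g p.2

/-- Row space `rs(M)`: the span of the rows of `M`. -/
def rowSpace {m n : Type*} (M : Matrix m n (ZMod 2)) : Submodule (ZMod 2) (n → ZMod 2) :=
  Submodule.span (ZMod 2) (Set.range fun i => M i)

/-- Column space `cs(M)`: the span of the columns of `M`. -/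
def colSpace {m n : Type*} (M : Matrix m n (ZMod 2)) : Submodule (ZMod 2) (m → ZMod 2) :=
  Submodule.span (ZMod 2) (Set.range fun j i => M i j)

/-- The matrix `R` with `R(i,j) = 1` iff `i + j = 0`. -/
def Rmat {G : Type*} [AddCommGroup G] [DecidableEq G] : Matrix G G (ZMod 2) :=
  Matrix.of fun i j => if i + j = 0 then 1 else 0

/-- `D_R = diag(R, R, R)`. -/
def DRmat {G : Type*} [AddCommGroup G] [DecidableEq G] :
    Matrix (Fin 3 × G) (Fin 3 × G) (ZMod 2) :=
  Matrix.of fun p q => if p.1 = q.1 then Rmat p.2 q.2 else 0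

section Aux

set_option linter.unusedSectionVars false

variable {G : Type*} [AddCommGroup G] [Fintype G] [DecidableEq G] (a b c : G → ZMod 2)

/-- The underlying index involution. -/
def ttSigma : (Fin 3 × G) ≃ (Fin 3 × G) :=
  (Equiv.refl (Fin 3)).prodCongr (Equiv.neg G)

lemma ttSigma_apply (p : Fin 3 × G) : ttSigma p = (p.1, -p.2) := rfl

lemma DR_mulVec (v : Fin 3 × G → ZMod 2) :
    DRmat.mulVec v = fun p => v (p.1, -p.2) := by
  funext p
  simp only [Matrix.mulVec, dotProduct, DRmat, Rmat, Matrix.of_apply]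
  rw [Finset.sum_eq_single (p.1, -p.2)]
  · simp
  · rintro ⟨i, g⟩ _ hq
    by_cases h1 : p.1 = i
    · have h2 : p.2 + g ≠ 0 := by
        intro h
        exact hq (by simp [Prod.ext_iff, ← h1, neg_eq_of_add_eq_zero_right h])
      simp [h1, h2]
    · simp [h1]
  · simp

/-- `φ` as a linear map: precomposition with `ttSigma`. -/
def ttPhi : (Fin 3 × G → ZMod 2) →ₗ[ZMod 2] (Fin 3 × G → ZMod 2) :=
  LinearMap.funLeft (ZMod 2) (ZMod 2) ttSigma

lemma ttPhi_apply (v : Fin 3 × G → ZMod 2) : ttPhi v = fun p => v (p.1, -p.2) := rfl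

lemma ttPhi_phi (v : Fin 3 × G → ZMod 2) : ttPhi (ttPhi v) = v := by
  funext p; simp [ttPhi_apply]

lemma ttPhi_inj : Function.Injective (ttPhi (G := G)) :=
  Function.LeftInverse.injective ttPhi_phi

lemma HZ_symm (j i : Fin 3) (h g : G) :
    TT_HZ a b c (j, -h) (i, g) = TT_HZ a b c (i, -g) (j, h) := by
  fin_cases j <;> fin_cases i <;>
    simp [TT_HZ, Matrix.circulant_apply, Matrix.transpose_apply, add_comm, sub_neg_eq_add]

lemma HZT_mulVec_phi (v : Fin 3 × G → ZMod 2) :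
    (TT_HZ a b c)ᵀ.mulVec (ttPhi v) = ttPhi ((TT_HZ a b c).mulVec v) := by
  funext p
  obtain ⟨i, g⟩ := p
  simp only [Matrix.mulVec, dotProduct, Matrix.transpose_apply, ttPhi_apply]
  rw [← Equiv.sum_comp (ttSigma (G := G))]
  refine Finset.sum_congr rfl fun q _ => ?_
  obtain ⟨j, h⟩ := q
  simp [ttSigma_apply, HZ_symm]

lemma HX_row (g : G) : ttPhi (TT_HX a b c g) = TT_MZ a b c (-g) := by
  funext p
  obtain ⟨i, h⟩ := p
  fin_cases i <;>
    simp [ttPhi_apply, TT_HX, TT_MZ, Matrix.circulant_apply, Matrix.transpose_apply,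
      add_comm, sub_neg_eq_add]

lemma map_rowSpace :
    Submodule.map ttPhi (rowSpace (TT_HX a b c)) = rowSpace (TT_MZ a b c) := by
  rw [rowSpace, Submodule.map_span, ← Set.range_comp]
  congr 1
  ext v
  constructor
  · rintro ⟨g, rfl⟩
    exact ⟨-g, by simp [Function.comp, HX_row]⟩
  · rintro ⟨g, rfl⟩
    exact ⟨-g, by simp [Function.comp, HX_row]⟩

lemma mem_rowSpace_iff (v : Fin 3 × G → ZMod 2) :
    v ∈ rowSpace (TT_HX a b c) ↔ ttPhi v ∈ rowSpace (TT_MZ a b c) := by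
  rw [← map_rowSpace a b c]
  constructor
  · intro hv; exact ⟨v, hv, rfl⟩
  · rintro ⟨u, hu, he⟩
    rwa [ttPhi_inj he] at hu

lemma phi_norm (v : Fin 3 × G → ZMod 2) : hammingNorm (ttPhi v) = hammingNorm v := by
  unfold hammingNorm
  apply Finset.card_bij' (fun p _ => ttSigma p) (fun p _ => ttSigma p) <;>
    simp [ttSigma_apply, ttPhi_apply]
  · intro a b h; exact (Finset.mem_filter.1 h).2
  · intro a b h; exact Finset.mem_filter.2 ⟨Finset.mem_univ _, by simpa using h⟩

end Aux

/-- The involution `v ↦ D_R v` maps `ker(H_Z) \ rs(H_X)` bijectively onto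
`ker(H_Zᵀ) \ rs(M_Z)` preserving Hamming weight; consequently the `X`-distance
`d_X` equals `min{|v| : v ∈ ker(H_Zᵀ) \ rs(M_Z)}`. -/
theorem tt_dX_eq_cocycle_distance {G : Type*} [AddCommGroup G] [Fintype G]
    [DecidableEq G] (a b c : G → ZMod 2) :
    Set.BijOn (fun v => DRmat.mulVec v)
        {v : Fin 3 × G → ZMod 2 |
          (TT_HZ a b c).mulVec v = 0 ∧ v ∉ rowSpace (TT_HX a b c)}
        {v : Fin 3 × G → ZMod 2 |
          (TT_HZ a b c)ᵀ.mulVec v = 0 ∧ v ∉ rowSpace (TT_MZ a b c)} ∧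
      (∀ v : Fin 3 × G → ZMod 2, hammingNorm (DRmat.mulVec v) = hammingNorm v) ∧
      sInf {w : ℕ | ∃ v : Fin 3 × G → ZMod 2,
            ((TT_HZ a b c).mulVec v = 0 ∧ v ∉ rowSpace (TT_HX a b c)) ∧
              hammingNorm v = w} =
        sInf {w : ℕ | ∃ v : Fin 3 × G → ZMod 2,
            ((TT_HZ a b c)ᵀ.mulVec v = 0 ∧ v ∉ rowSpace (TT_MZ a b c)) ∧
              hammingNorm v = w} := by
  have hDR : ∀ v : Fin 3 × G → ZMod 2, DRmat.mulVec v = ttPhi v := fun v =>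
    (DR_mulVec v).trans (ttPhi_apply v).symm
  have hker : ∀ v : Fin 3 × G → ZMod 2,
      (TT_HZ a b c).mulVec v = 0 ↔ (TT_HZ a b c)ᵀ.mulVec (ttPhi v) = 0 := by
    intro v
    rw [HZT_mulVec_phi]
    constructor
    · intro h; rw [h]; exact map_zero _
    · intro h
      have := ttPhi_inj (G := G) (a₂ := 0) (by rw [h, map_zero])
      exact this
  have hmem := mem_rowSpace_iff a b c
  have hS : ∀ v : Fin 3 × G → ZMod 2,
      ((TT_HZ a b c).mulVec v = 0 ∧ v ∉ rowSpace (TT_HX a b c)) ↔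
        ((TT_HZ a b c)ᵀ.mulVec (ttPhi v) = 0 ∧ ttPhi v ∉ rowSpace (TT_MZ a b c)) := by
    intro v
    rw [← hker, ← hmem]
  refine ⟨⟨?_, ?_, ?_⟩, ?_, ?_⟩
  · intro v hv
    simp only [Set.mem_setOf_eq, hDR]
    exact (hS v).1 hv
  · intro u _ v _ he
    simp only [hDR] at he
    exact ttPhi_inj he
  · intro w hw
    refine ⟨ttPhi w, ?_, by simp only []; rw [hDR, ttPhi_phi]⟩
    simp only [Set.mem_setOf_eq]
    rw [hS (ttPhi w), ttPhi_phi]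
    exact hw
  · intro v; rw [hDR]; exact phi_norm v
  · congr 1
    ext w
    simp only [Set.mem_setOf_eq]
    constructor
    · rintro ⟨v, hv, rfl⟩
      exact ⟨ttPhi v, (hS v).1 hv, phi_norm v⟩
    · rintro ⟨v, hv, rfl⟩
      refine ⟨ttPhi v, ?_, phi_norm v⟩
      rw [hS (ttPhi v), ttPhi_phi]
      exact hv
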